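/- Let q be a primitive m-th root of unity in K and set n = m if m is odd and n = m/2 if m is even. Then the elements u12^n, u21^n and u22^n are central in A_q(M₂). -/

import Mathlib

noncomputable section

open FreeAlgebra MulOpposite

/-- The relations of the reflection equation algebra of rank 2:
`u11·u22 = u22·u11`, `u22·u12 = q²·u12·u22`, `u21·u22 = q²·u22·u21`,
`u11·u12 = u12·(u11 + (q^{−2}−1)·u22)`, `u21·u11 = (u11 + (q^{−2}−1)·u22)·u21`,
`u21·u12 − u12·u21 = (q^{−2}−1)·u22·(u22 − u11)`, where the generators
`u11, u12, u21, u22` are the images of `0, 1, 2, 3 : Fin 4`. -/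
inductive REArel {K : Type*} [Field K] (q : K) :
    FreeAlgebra K (Fin 4) → FreeAlgebra K (Fin 4) → Prop
  | r1 : REArel q (ι K (0 : Fin 4) * ι K (3 : Fin 4)) (ι K (3 : Fin 4) * ι K (0 : Fin 4))
  | r2 : REArel q (ι K (3 : Fin 4) * ι K (1 : Fin 4))
      (q ^ 2 • (ι K (1 : Fin 4) * ι K (3 : Fin 4)))
  | r3 : REArel q (ι K (2 : Fin 4) * ι K (3 : Fin 4))
      (q ^ 2 • (ι K (3 : Fin 4) * ι K (2 : Fin 4)))
  | r4 : REArel q (ι K (0 : Fin 4) * ι K (1 : Fin 4))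
      (ι K (1 : Fin 4) * (ι K (0 : Fin 4) + (q⁻¹ ^ 2 - 1) • ι K (3 : Fin 4)))
  | r5 : REArel q (ι K (2 : Fin 4) * ι K (0 : Fin 4))
      ((ι K (0 : Fin 4) + (q⁻¹ ^ 2 - 1) • ι K (3 : Fin 4)) * ι K (2 : Fin 4))
  | r6 : REArel q (ι K (2 : Fin 4) * ι K (1 : Fin 4))
      (ι K (1 : Fin 4) * ι K (2 : Fin 4) +
        (q⁻¹ ^ 2 - 1) • (ι K (3 : Fin 4) * (ι K (3 : Fin 4) - ι K (0 : Fin 4))))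

/-- The reflection equation algebra `A_q(M₂)` of rank 2: the quotient of the free
`K`-algebra on four generators by the two-sided ideal generated by the relations above. -/
abbrev REA {K : Type*} [Field K] (q : K) := RingQuot (REArel q)

variable {K : Type*} [Field K]

/-- The generator `u11` of `A_q(M₂)`. -/
def u11 (q : K) : REA q := RingQuot.mkAlgHom K (REArel q) (ι K (0 : Fin 4))
/-- The generator `u12` of `A_q(M₂)`. -/
def u12 (q : K) : REA q := RingQuot.mkAlgHom K (REArel q) (ι K (1 : Fin 4))
/-- The generator `u21` of `A_q(M₂)`. -/
def u21 (q : K) : REA q := RingQuot.mkAlgHom K (REArel q) (ι K (2 : Fin 4))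
/-- The generator `u22` of `A_q(M₂)`. -/
def u22 (q : K) : REA q := RingQuot.mkAlgHom K (REArel q) (ι K (3 : Fin 4))

namespace REAaux
open Finset
variable {K : Type*} [Field K]

/-- geometric sum of `q^2`. -/
def s2 (q : K) (k : ℕ) : K := ∑ i ∈ Finset.range k, (q^2)^i

/-- coefficient sequence α -/
def al (q : K) : ℕ → K
  | 0 => q⁻¹^2 - 1
  | k+1 => al q k + (q⁻¹^2-1) * ((q^2)^(k+1))^2 - (q⁻¹^2-1)^2 * s2 q (k+1) * (q^2)^(k+1)

/-- coefficient sequence β -/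
def be (q : K) : ℕ → K
  | 0 => -(q⁻¹^2 - 1)
  | k+1 => be q k - (q⁻¹^2-1) * (q^2)^(k+1)

lemma s2_succ (q : K) (k : ℕ) : s2 q (k+1) = s2 q k + (q^2)^k := by
  simp [s2, Finset.sum_range_succ]

lemma ts2 (q : K) (hq : q ≠ 0) (k : ℕ) :
    (q⁻¹^2-1) * s2 q k = q⁻¹^2 * (1 - (q^2)^k) := by
  have hq2 : q^2 ≠ 0 := pow_ne_zero _ hq
  induction k with
  | zero => simp [s2]
  | succ k ih =>
    rw [s2_succ, mul_add, ih]
    field_simp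
    ring

lemma be_eq (q : K) (hq : q ≠ 0) (k : ℕ) :
    be q k = -(q⁻¹^2 * (1 - (q^2)^(k+1))) := by
  have hq2 : q^2 ≠ 0 := pow_ne_zero _ hq
  induction k with
  | zero =>
    simp only [be]
    field_simp
    ring
  | succ k ih =>
    simp only [be, ih]
    field_simp
    ring

lemma al_eq (q : K) (hq : q ≠ 0) (k : ℕ) :
    al q k = (q⁻¹^4 - 1) * (∑ i ∈ Finset.range (k+1), ((q^2)^2)^i)
      + q⁻¹^4 * ((q^2)^(k+1) - 1) := by
  have hq2 : q^2 ≠ 0 := pow_ne_zero _ hq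
  induction k with
  | zero =>
    simp only [al, Finset.sum_range_one, pow_zero]
    field_simp
    simp only [zero_add, Finset.sum_range_one]
    ring
  | succ k ih =>
    have hts := ts2 q hq (k+1)
    simp only [al]
    rw [show (q⁻¹^2-1)^2 * s2 q (k+1) * (q^2)^(k+1)
        = (q⁻¹^2-1) * ((q⁻¹^2-1) * s2 q (k+1)) * (q^2)^(k+1) from by ring,
      hts, ih,
      show (∑ i ∈ Finset.range (k+1+1), ((q^2)^2)^i)
        = (∑ i ∈ Finset.range (k+1), ((q^2)^2)^i) + ((q^2)^2)^(k+1) from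
        Finset.sum_range_succ _ _]
    field_simp
    ring

lemma be_zero (q : K) (hq : q ≠ 0) (k : ℕ) (h : (q^2)^(k+1) = 1) : be q k = 0 := by
  rw [be_eq q hq, h]; ring

lemma al_zero (q : K) (hq : q ≠ 0) (k : ℕ) (h : (q^2)^(k+1) = 1) : al q k = 0 := by
  have h4 : ((q^2)^2)^(k+1) = 1 := by
    rw [← pow_mul, mul_comm, pow_mul, h, one_pow]
  have hg : (∑ i ∈ Finset.range (k+1), ((q^2)^2)^i) * ((q^2)^2 - 1) = 0 := by
    rw [geom_sum_mul, h4, sub_self]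
  rcases mul_eq_zero.mp hg with hs | hd
  · rw [al_eq q hq, h, hs]; ring
  · have h1 : q^4 = 1 := by
      have := sub_eq_zero.mp hd
      rw [← pow_mul] at this
      norm_num at this
      exact this
    have hinv : q⁻¹^4 = 1 := by rw [inv_pow, h1, inv_one]
    rw [al_eq q hq, h, hinv]; ring

lemma ts2_zero (q : K) (hq : q ≠ 0) (n : ℕ) (h : (q^2)^n = 1) :
    (q⁻¹^2-1) * s2 q n = 0 := by
  rw [ts2 q hq, h]; ring

section Alg
variable {A : Type*} [Ring A] [Algebra K A] (q : K) (a b c d : A)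

lemma L1 (R2 : d*b = q^2 • (b*d)) (k : ℕ) :
    d * b^k = ((q^2)^k) • (b^k * d) := by
  induction k with
  | zero => simp
  | succ k ih =>
    rw [pow_succ', ← mul_assoc, R2, smul_mul_assoc, mul_assoc, ih,
      mul_smul_comm, smul_smul, ← mul_assoc, ← pow_succ']

lemma L2 (R2 : d*b = q^2 • (b*d)) (R4 : a*b = b*a + (q⁻¹^2-1) • (b*d)) (k : ℕ) :
    a * b^k = b^k * a + ((q⁻¹^2-1) * s2 q k) • (b^k * d) := by
  induction k with
  | zero => simp [s2]
  | succ k ih =>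
    rw [pow_succ', ← mul_assoc, R4, add_mul, smul_mul_assoc, mul_assoc, ih,
      mul_assoc, L1 q b d R2 k, s2_succ, mul_add, mul_smul_comm, mul_smul_comm,
      ← mul_assoc b (b^k) a, ← mul_assoc b (b^k) d, ← pow_succ', smul_smul]
    module

lemma L3 (R1 : a*d = d*a) (R2 : d*b = q^2 • (b*d))
    (R4 : a*b = b*a + (q⁻¹^2-1) • (b*d))
    (R6 : c*b = b*c + (q⁻¹^2-1) • (d*d) - (q⁻¹^2-1) • (d*a)) (k : ℕ) :
    c * b^(k+1) = b^(k+1)*c + al q k • (b^k * (d*d)) + be q k • (b^k * (d*a)) := by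
  induction k with
  | zero =>
    simp only [zero_add, pow_one, pow_zero, one_mul, al, be, neg_smul]
    rw [R6]; abel
  | succ k ih =>
    have hdd : (d*d) * b^(k+1) = ((q^2)^(k+1))^2 • (b^(k+1) * (d*d)) := by
      rw [mul_assoc d d, L1 q b d R2, mul_smul_comm, ← mul_assoc d (b^(k+1)) d,
        L1 q b d R2, smul_mul_assoc, smul_smul, mul_assoc (b^(k+1)) d d, ← sq]
    have hda : (d*a) * b^(k+1) = ((q^2)^(k+1)) • (b^(k+1) * (d*a))
        + (((q^2)^(k+1)) * ((q⁻¹^2-1) * s2 q (k+1))) • (b^(k+1) * (d*d)) := by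
      rw [mul_assoc d a, L2 q a b d R2 R4 (k+1), mul_add, mul_smul_comm,
        ← mul_assoc d (b^(k+1)) a, ← mul_assoc d (b^(k+1)) d, L1 q b d R2,
        smul_mul_assoc, smul_mul_assoc, smul_smul,
        mul_assoc (b^(k+1)) d a, mul_assoc (b^(k+1)) d d]
      module
    calc c * b^(k+1+1) = (c * b) * b^(k+1) := by rw [pow_succ', ← mul_assoc]
    _ = b * (c * b^(k+1)) + (q⁻¹^2-1) • ((d*d) * b^(k+1))
        - (q⁻¹^2-1) • ((d*a) * b^(k+1)) := by
      rw [R6, sub_mul, add_mul, smul_mul_assoc, smul_mul_assoc, mul_assoc]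
    _ = _ := by
      rw [ih, hdd, hda]
      rw [mul_add, mul_add, mul_smul_comm, mul_smul_comm,
        ← mul_assoc b (b^(k+1)) c, ← pow_succ',
        ← mul_assoc b (b^k) (d*d), ← mul_assoc b (b^k) (d*a), ← pow_succ',
        al, be]
      module

lemma M1 (R3 : c*d = q^2 • (d*c)) (k : ℕ) :
    c^k * d = ((q^2)^k) • (d * c^k) := by
  induction k with
  | zero => simp
  | succ k ih =>
    rw [pow_succ, mul_assoc, R3, mul_smul_comm, ← mul_assoc, ih,
      smul_mul_assoc, smul_smul, mul_assoc d (c^k) c, ← pow_succ, ← pow_succ']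

lemma M2 (R3 : c*d = q^2 • (d*c)) (R5 : c*a = a*c + (q⁻¹^2-1) • (d*c)) (k : ℕ) :
    c^k * a = a * c^k + ((q⁻¹^2-1) * s2 q k) • (d * c^k) := by
  induction k with
  | zero => simp [s2]
  | succ k ih =>
    rw [pow_succ, mul_assoc, R5, mul_add, mul_smul_comm,
      ← mul_assoc (c^k) a c, ← mul_assoc (c^k) d c, ih, M1 q c d R3 k,
      add_mul, smul_mul_assoc, smul_mul_assoc, smul_smul,
      mul_assoc a (c^k) c, mul_assoc d (c^k) c, ← pow_succ, s2_succ]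
    module

lemma M3 (R1 : a*d = d*a) (R3 : c*d = q^2 • (d*c))
    (R5 : c*a = a*c + (q⁻¹^2-1) • (d*c))
    (R6 : c*b = b*c + (q⁻¹^2-1) • (d*d) - (q⁻¹^2-1) • (d*a)) (k : ℕ) :
    c^(k+1) * b = b * c^(k+1) + al q k • ((d*d) * c^k) + be q k • ((d*a) * c^k) := by
  induction k with
  | zero =>
    simp only [zero_add, pow_one, pow_zero, mul_one, al, be, neg_smul]
    rw [R6]; abel
  | succ k ih =>
    have hdd : c^(k+1) * (d*d) = ((q^2)^(k+1))^2 • ((d*d) * c^(k+1)) := by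
      rw [← mul_assoc (c^(k+1)) d d, M1 q c d R3, smul_mul_assoc,
        mul_assoc d (c^(k+1)) d, M1 q c d R3, mul_smul_comm, smul_smul,
        ← mul_assoc d d (c^(k+1)), ← sq]
    have hda : c^(k+1) * (d*a) = ((q^2)^(k+1)) • ((d*a) * c^(k+1))
        + (((q^2)^(k+1)) * ((q⁻¹^2-1) * s2 q (k+1))) • ((d*d) * c^(k+1)) := by
      rw [← mul_assoc (c^(k+1)) d a, M1 q c d R3, smul_mul_assoc,
        mul_assoc d (c^(k+1)) a, M2 q a c d R3 R5 (k+1), mul_add, mul_smul_comm,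
        ← mul_assoc d a (c^(k+1)), ← mul_assoc d d (c^(k+1)), smul_add, smul_smul]
    calc c^(k+1+1) * b = c^(k+1) * (c * b) := by rw [pow_succ, mul_assoc]
    _ = (c^(k+1) * b) * c + (q⁻¹^2-1) • (c^(k+1) * (d*d))
        - (q⁻¹^2-1) • (c^(k+1) * (d*a)) := by
      rw [R6, mul_sub, mul_add, mul_smul_comm, mul_smul_comm, ← mul_assoc]
    _ = _ := by
      rw [ih, hdd, hda]
      rw [add_mul, add_mul, smul_mul_assoc, smul_mul_assoc,
        mul_assoc b (c^(k+1)) c, ← pow_succ,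
        mul_assoc (d*d) (c^k) c, mul_assoc (d*a) (c^k) c, ← pow_succ,
        al, be]
      module

end Alg


lemma central_of_four (q : K) (g : REA q)
    (h1 : g * u11 q = u11 q * g) (h2 : g * u12 q = u12 q * g)
    (h3 : g * u21 q = u21 q * g) (h4 : g * u22 q = u22 q * g) :
    ∀ x : REA q, g * x = x * g := by
  intro x
  obtain ⟨y, rfl⟩ := RingQuot.mkAlgHom_surjective K (REArel q) x
  induction y using FreeAlgebra.induction with
  | grade0 r => rw [AlgHom.commutes]; exact (Algebra.commutes r g).symm
  | grade1 i => fin_cases i <;> [exact h1; exact h2; exact h3; exact h4]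
  | mul x y hx hy => rw [map_mul, ← mul_assoc, hx, mul_assoc, hy, mul_assoc]
  | add x y hx hy => rw [map_add, mul_add, add_mul, hx, hy]

lemma relations (q : K) :
    u11 q * u22 q = u22 q * u11 q ∧
    u22 q * u12 q = q^2 • (u12 q * u22 q) ∧
    u21 q * u22 q = q^2 • (u22 q * u21 q) ∧
    u11 q * u12 q = u12 q * u11 q + (q⁻¹^2-1) • (u12 q * u22 q) ∧
    u21 q * u11 q = u11 q * u21 q + (q⁻¹^2-1) • (u22 q * u21 q) ∧
    u21 q * u12 q = u12 q * u21 q + (q⁻¹^2-1) • (u22 q * u22 q)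
      - (q⁻¹^2-1) • (u22 q * u11 q) := by
  refine ⟨?_, ?_, ?_, ?_, ?_, ?_⟩
  · simpa only [u11, u22, map_mul] using
      RingQuot.mkAlgHom_rel K (REArel.r1 (q := q))
  · simpa only [u12, u22, map_mul, map_smul] using
      RingQuot.mkAlgHom_rel K (REArel.r2 (q := q))
  · simpa only [u21, u22, map_mul, map_smul] using
      RingQuot.mkAlgHom_rel K (REArel.r3 (q := q))
  · have h := RingQuot.mkAlgHom_rel K (REArel.r4 (q := q))
    simp only [map_mul, map_add, map_smul] at h
    rw [u11, u12, u22, h, mul_add, mul_smul_comm]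
  · have h := RingQuot.mkAlgHom_rel K (REArel.r5 (q := q))
    simp only [map_mul, map_add, map_smul] at h
    rw [u21, u11, u22, h, add_mul, smul_mul_assoc]
  · have h := RingQuot.mkAlgHom_rel K (REArel.r6 (q := q))
    simp only [map_mul, map_add, map_sub, map_smul] at h
    rw [u21, u12, u11, u22, h, mul_sub, smul_sub]
    abel

end REAaux

/-- Let `q` be a primitive `m`-th root of unity in `K` and set `n = m`
if `m` is odd and `n = m/2` if `m` is even. Then `u12^n`, `u21^n` and `u22^n` are central
in `A_q(M₂)`. -/
theorem REA_pow_n_central (q : K) (hq : q ≠ 0) (m n : ℕ)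
    (hq1 : q ^ m = 1) (hq2 : ∀ k : ℕ, 1 ≤ k → k < m → q ^ k ≠ 1)
    (hn : n = if Odd m then m else m / 2) :
    (∀ x : REA q, u12 q ^ n * x = x * u12 q ^ n) ∧
    (∀ x : REA q, u21 q ^ n * x = x * u21 q ^ n) ∧
    (∀ x : REA q, u22 q ^ n * x = x * u22 q ^ n) := by
  classical
  obtain ⟨R1, R2, R3, R4, R5, R6⟩ := REAaux.relations q
  set a := u11 q
  set b := u12 q
  set c := u21 q
  set d := u22 q
  have h2n : (q^2)^n = 1 := by
    by_cases hodd : Odd m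
    · rw [hn, if_pos hodd, ← pow_mul, mul_comm, pow_mul, hq1, one_pow]
    · rw [hn, if_neg hodd, ← pow_mul,
        Nat.mul_div_cancel' ((Nat.not_odd_iff_even.mp hodd).two_dvd),
        hq1]
  -- commutation of powers of b with the generators
  have hba : b^n * a = a * b^n := by
    rw [REAaux.L2 q a b d R2 R4 n, REAaux.ts2_zero q hq n h2n, zero_smul, add_zero]
  have hbd : b^n * d = d * b^n := by
    rw [REAaux.L1 q b d R2 n, h2n, one_smul]
  have hbc : b^n * c = c * b^n := by
    cases n with
    | zero => rw [pow_zero, one_mul, mul_one]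
    | succ k =>
      rw [REAaux.L3 q a b c d R1 R2 R4 R6 k, REAaux.al_zero q hq k h2n,
        REAaux.be_zero q hq k h2n, zero_smul, zero_smul, add_zero, add_zero]
  -- commutation of powers of c with the generators
  have hca : c^n * a = a * c^n := by
    rw [REAaux.M2 q a c d R3 R5 n, REAaux.ts2_zero q hq n h2n, zero_smul, add_zero]
  have hcd : c^n * d = d * c^n := by
    rw [REAaux.M1 q c d R3 n, h2n, one_smul]
  have hcb : c^n * b = b * c^n := by
    cases n with
    | zero => rw [pow_zero, one_mul, mul_one]
    | succ k =>
      rw [REAaux.M3 q a b c d R1 R3 R5 R6 k, REAaux.al_zero q hq k h2n,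
        REAaux.be_zero q hq k h2n, zero_smul, zero_smul, add_zero, add_zero]
  -- commutation of powers of d with the generators
  have hda : d^n * a = a * d^n :=
    ((show Commute d a from R1.symm).pow_left n).eq
  have hdb : d^n * b = b * d^n := by
    rw [REAaux.M1 q d b R2 n, h2n, one_smul]
  have hdc : d^n * c = c * d^n := by
    have := REAaux.L1 q d c R3 n
    rw [h2n, one_smul] at this
    exact this.symm
  refine ⟨?_, ?_, ?_⟩
  · exact REAaux.central_of_four q (b^n) hba ((Commute.refl b).pow_left n).eq
      hbc hbd
  · exact REAaux.central_of_four q (c^n) hca hcb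
      ((Commute.refl c).pow_left n).eq hcd
  · exact REAaux.central_of_four q (d^n) hda hdb hdc
      ((Commute.refl d).pow_left n).eq
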